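/- In any simple graph G on n vertices with n > k ≥ 1, there exist k+1 vertices whose degrees pairwise differ by less than k. -/

import Mathlib

theorem stmt_0 (n k : ℕ) (hk : 1 ≤ k) (hnk : k < n)
    (G : SimpleGraph (Fin n)) [DecidableRel G.Adj] :
    ∃ S : Finset (Fin n), S.card = k + 1 ∧
      ∀ u ∈ S, ∀ v ∈ S, |(G.degree u : ℤ) - (G.degree v : ℤ)| < k := by
  by_contra hcon
  push_neg at hcon
  -- sort the vertices by degree
  obtain ⟨σ, hmono⟩ : ∃ σ : Equiv.Perm (Fin n),
      Monotone (fun x : Fin n => G.degree (σ x)) :=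
    ⟨Tuple.sort (fun v => G.degree v), Tuple.monotone_sort (fun v => G.degree v)⟩
  have hmono' : ∀ a b : Fin n, a ≤ b → G.degree (σ a) ≤ G.degree (σ b) :=
    fun a b hab => hmono hab
  -- Claim 1 : the sorted degree sequence jumps by ≥ k every k steps
  have claim1 : ∀ a b : Fin n, (b : ℕ) = (a : ℕ) + k →
      G.degree (σ a) + k ≤ G.degree (σ b) := by
    intro a b hab
    have hbn := b.isLt
    have hinj : Function.Injective (fun t : Fin (k+1) => σ ⟨(a : ℕ) + t.1, by omega⟩) := by
      intro x y hxy
      have := σ.injective hxy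
      rw [Fin.mk.injEq] at this
      exact Fin.ext (by omega)
    obtain ⟨u, hu, v, hv, huv⟩ :=
      hcon (Finset.univ.image (fun t : Fin (k+1) => σ ⟨(a : ℕ) + t.1, by omega⟩)) (by
        rw [Finset.card_image_of_injective _ hinj, Finset.card_univ, Fintype.card_fin])
    obtain ⟨t₁, _, rfl⟩ := Finset.mem_image.mp hu
    obtain ⟨t₂, _, rfl⟩ := Finset.mem_image.mp hv
    have hb : ∀ t : Fin (k+1),
        G.degree (σ a) ≤ G.degree (σ ⟨(a : ℕ) + t.1, by omega⟩) ∧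
        G.degree (σ ⟨(a : ℕ) + t.1, by omega⟩) ≤ G.degree (σ b) := by
      intro t
      refine ⟨hmono' _ _ ?_, hmono' _ _ ?_⟩ <;> rw [Fin.le_def] <;> simp only [Fin.val_mk] <;> omega
    have h1 := (hb t₁).1
    have h2 := (hb t₁).2
    have h3 := (hb t₂).1
    have h4 := (hb t₂).2
    rcases le_abs.mp huv with h' | h' <;> omega
  -- Claim 2 : iterate
  have claim2 : ∀ m (a b : Fin n), (b : ℕ) = (a : ℕ) + m * k →
      G.degree (σ a) + m * k ≤ G.degree (σ b) := by
    intro m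
    induction m with
    | zero =>
        intro a b hab
        have : a = b := Fin.ext (by omega)
        subst this
        simp
    | succ m ih =>
        intro a b hab
        have hmk : (m + 1) * k = m * k + k := by ring
        have hbn := b.isLt
        have hmid : (a : ℕ) + m * k < n := by omega
        have h1 := ih a ⟨(a : ℕ) + m * k, hmid⟩ rfl
        have h2 := claim1 ⟨(a : ℕ) + m * k, hmid⟩ b (by simp; omega)
        omega
  -- set up q and s with n = q*k + s, 1 ≤ s ≤ k, 1 ≤ q
  obtain ⟨q, r, hq1, hrk, hqr⟩ : ∃ q r, 1 ≤ q ∧ r < k ∧ n - 1 = q * k + r := by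
    refine ⟨(n - 1) / k, (n - 1) % k, ?_, Nat.mod_lt _ (by omega), ?_⟩
    · exact (Nat.one_le_div_iff (by omega)).mpr (by omega)
    · have h1 := Nat.div_add_mod (n - 1) k
      have h2 : k * ((n - 1) / k) = ((n - 1) / k) * k := Nat.mul_comm _ _
      omega
  obtain ⟨s, hsdef⟩ : ∃ s, s = n - q * k := ⟨_, rfl⟩
  have hkqk : k ≤ q * k := Nat.le_mul_of_pos_left k (by omega)
  have hs1 : 1 ≤ s := by omega
  have hsk : s ≤ k := by omega
  have hn : n = q * k + s := by omega
  have hsqk : s ≤ q * k := by omega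
  -- degree bound
  have hdle : ∀ v : Fin n, G.degree v ≤ n - 1 := by
    intro v
    have := G.degree_lt_card_verts v
    simp only [Fintype.card_fin] at this
    omega
  -- the low family eA and high family eB
  have hjlt : ∀ j : Fin s, (j : ℕ) < n := fun j => by have := j.isLt; omega
  have hjqlt : ∀ j : Fin s, (j : ℕ) + q * k < n := fun j => by have := j.isLt; omega
  set eA : Fin s → Fin n := fun j => σ ⟨j, hjlt j⟩ with heA
  set eB : Fin s → Fin n := fun j => σ ⟨(j : ℕ) + q * k, hjqlt j⟩ with heB
  set D : Fin s → ℕ := fun j => G.degree (σ ⟨j, hjlt j⟩) with hD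
  have hdegA : ∀ j : Fin s, G.degree (eA j) = D j := by
    intro j; simp only [heA, hD]; rfl
  have hdegB : ∀ j : Fin s, D j + q * k ≤ G.degree (eB j) := by
    intro j
    have := claim2 q ⟨j, hjlt j⟩ ⟨(j : ℕ) + q * k, hjqlt j⟩ rfl
    simp only [heB, hD]
    exact this
  have hAB : ∀ i j : Fin s, eA i ≠ eB j := by
    intro i j hEq
    simp only [heA, heB] at hEq
    have := σ.injective hEq
    rw [Fin.mk.injEq] at this
    have hi := i.isLt
    omega
  have hAinj : Function.Injective eA := by
    intro a b hab
    simp only [heA] at hab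
    have := σ.injective hab
    rw [Fin.mk.injEq] at this
    exact Fin.ext this
  -- counting non-adjacencies between the two families
  set c : Fin s → Fin s → ℕ := fun i j => if ¬ G.Adj (eA i) (eB j) then 1 else 0 with hc
  -- lower bound: for each i, s ≤ (∑ j, c i j) + D i
  have hlow : ∀ i : Fin s, s ≤ (∑ j, c i j) + D i := by
    intro i
    have hsum : (∑ j, c i j) = (Finset.univ.filter (fun j => ¬ G.Adj (eA i) (eB j))).card := by
      rw [hc, Finset.sum_boole]; simp
    have hsplit := Finset.card_filter_add_card_filter_not
      (s := (Finset.univ : Finset (Fin s))) (p := fun j => G.Adj (eA i) (eB j))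
    have hadj : (Finset.univ.filter (fun j => G.Adj (eA i) (eB j))).card ≤ D i := by
      rw [← hdegA i, ← SimpleGraph.card_neighborFinset_eq_degree]
      apply Finset.card_le_card_of_injOn eB
      · intro j hj
        simp only [Finset.mem_coe, Finset.mem_filter] at hj
        rw [Finset.mem_coe, SimpleGraph.mem_neighborFinset]
        exact hj.2
      · intro x _ y _ hxy
        simp only [heB] at hxy
        have := σ.injective hxy
        rw [Fin.mk.injEq] at this
        exact Fin.ext (by omega)
    have hcard : (Finset.univ : Finset (Fin s)).card = s := by simp
    omega
  -- upper bound: for each j, (∑ i, c i j) + D j + 1 ≤ s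
  have hhigh : ∀ j : Fin s, (∑ i, c i j) + D j + 1 ≤ s := by
    intro j
    have hsum : (∑ i, c i j) = (Finset.univ.filter (fun i => ¬ G.Adj (eA i) (eB j))).card := by
      rw [hc, Finset.sum_boole]; simp
    set T : Finset (Fin n) :=
      Finset.univ.filter (fun x => ¬ G.Adj x (eB j) ∧ x ≠ eB j) with hT
    have hsub : (Finset.univ.filter (fun i => ¬ G.Adj (eA i) (eB j))).card ≤ T.card := by
      apply Finset.card_le_card_of_injOn eA
      · intro x hx
        simp only [Finset.mem_coe, Finset.mem_filter] at hx
        rw [hT, Finset.mem_coe, Finset.mem_filter]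
        exact ⟨Finset.mem_univ _, hx.2, hAB x j⟩
      · intro x _ y _ hxy
        exact hAinj hxy
    have hdisj1 : Disjoint T (G.neighborFinset (eB j)) := by
      rw [Finset.disjoint_left]
      intro x hx hx2
      simp only [hT, Finset.mem_filter] at hx
      rw [SimpleGraph.mem_neighborFinset] at hx2
      exact hx.2.1 (by rwa [G.adj_comm] at hx2)
    have hdisj2 : Disjoint (T ∪ G.neighborFinset (eB j)) ({eB j} : Finset (Fin n)) := by
      rw [Finset.disjoint_right]
      intro x hx hx2
      simp only [Finset.mem_singleton] at hx
      subst hx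
      rcases Finset.mem_union.mp hx2 with h | h
      · simp only [hT, Finset.mem_filter] at h
        exact h.2.2 rfl
      · rw [SimpleGraph.mem_neighborFinset] at h
        exact G.irrefl h
    have htot : (T ∪ G.neighborFinset (eB j) ∪ {eB j}).card ≤ n := by
      refine le_trans (Finset.card_le_univ _) ?_
      simp
    rw [Finset.card_union_of_disjoint hdisj2, Finset.card_union_of_disjoint hdisj1,
      Finset.card_singleton, SimpleGraph.card_neighborFinset_eq_degree] at htot
    have := hdegB j
    omega
  -- combine
  have htotlow : s * s ≤ (∑ i, ∑ j, c i j) + ∑ i, D i := by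
    calc s * s = ∑ _i : Fin s, s := by
          rw [Finset.sum_const, Finset.card_univ, Fintype.card_fin, smul_eq_mul]
    _ ≤ ∑ i : Fin s, ((∑ j, c i j) + D i) := Finset.sum_le_sum (fun i _ => hlow i)
    _ = (∑ i, ∑ j, c i j) + ∑ i, D i := Finset.sum_add_distrib
  have htothigh : (∑ i, ∑ j, c i j) + (∑ j, D j) + s ≤ s * s := by
    have h1 : ∑ j : Fin s, ((∑ i, c i j) + D j + 1) ≤ ∑ _j : Fin s, s :=
      Finset.sum_le_sum (fun j _ => hhigh j)
    rw [Finset.sum_add_distrib, Finset.sum_add_distrib] at h1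
    simp only [Finset.sum_const, Finset.card_univ, Fintype.card_fin, smul_eq_mul,
      Nat.mul_one] at h1
    rw [Finset.sum_comm]
    omega
  omega
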